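/- arXiv:2601.13030 — 6 statements merged into one kernel-verified Lean document; each statement's English description precedes it below -/
import Mathlib

section
/- Let θ be a match on {0, ..., l} with l ≥ 1 and θ(0) = k < l. Then θ restricted to {0,...,k} is a match on {0,...,k} and θ restricted to {k+1,...,l} is a match on {k+1,...,l}. -/
/-- A match on `{m, ..., n}`: an involution of the interval with no crossing, i.e.
there are no `i < j < θ i < θ j` within the interval. -/
def IsMatch (m n : ℕ) (θ : ℕ → ℕ) : Prop :=
  (∀ i, m ≤ i → i ≤ n → m ≤ θ i ∧ θ i ≤ n) ∧
  (∀ i, m ≤ i → i ≤ n → θ (θ i) = i) ∧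
  (¬ ∃ i j, m ≤ i ∧ i < j ∧ j ≤ n ∧ j < θ i ∧ θ i < θ j)

/-- if θ is a match on {0,...,l}, l ≥ 1 and θ 0 = k < l, then θ restricted to
{0,...,k} is a match on {0,...,k} and θ restricted to {k+1,...,l} is a match on
{k+1,...,l}. -/
theorem stmt6 (l k : ℕ) (θ : ℕ → ℕ) (hl : 1 ≤ l) (hθ : IsMatch 0 l θ)
    (h0 : θ 0 = k) (hk : k < l) :
    IsMatch 0 k θ ∧ IsMatch (k + 1) l θ := by
  obtain ⟨hrange, hinv, hnc⟩ := hθ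
  have hk0 : θ k = 0 := by
    have := hinv 0 (le_refl 0) (Nat.zero_le l)
    rwa [h0] at this
  -- Claim A : i ≤ k → θ i ≤ k
  have hA : ∀ i, i ≤ k → θ i ≤ k := by
    intro i hi
    by_contra hgt
    push_neg at hgt
    have hi0 : i ≠ 0 := by rintro rfl; omega
    have hik : i ≠ k := by rintro rfl; omega
    exact hnc ⟨0, i, le_refl 0, Nat.pos_of_ne_zero hi0, le_trans hi hk.le,
      by rw [h0]; omega, by rw [h0]; omega⟩
  have hB : ∀ i, k + 1 ≤ i → i ≤ l → k + 1 ≤ θ i := by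
    intro i hi hil
    by_contra hle
    push_neg at hle
    have h1 : θ i ≤ k := by omega
    have h2 : θ (θ i) ≤ k := hA _ h1
    rw [hinv i (Nat.zero_le _) hil] at h2
    omega
  refine ⟨⟨fun i _ hik => ⟨Nat.zero_le _, hA i hik⟩,
      fun i _ hik => hinv i (Nat.zero_le _) (le_trans hik hk.le),
      fun ⟨i, j, hmi, hij, hjk, hjt, htt⟩ =>
        hnc ⟨i, j, Nat.zero_le _, hij, le_trans hjk hk.le, hjt, htt⟩⟩,
    ⟨fun i hi hil => ⟨hB i hi hil, (hrange i (Nat.zero_le _) hil).2⟩,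
      fun i _ hil => hinv i (Nat.zero_le _) hil,
      fun ⟨i, j, hmi, hij, hjl, hjt, htt⟩ =>
        hnc ⟨i, j, Nat.zero_le _, hij, hjl, hjt, htt⟩⟩⟩
end

section
/- Let (X, d) be a metric space with d ≤ 1, extended to X̄ as above, and let δ be the Graev metric on the free group F(X), given for a reduced word w by δ(w, e) = min over matches θ of ρ(w, w^θ), where ρ is the sum of coordinatewise distances. If u ≠ v are elements of F(X) all of whose letters lie in a subset Y ⊆ X that is ε-separated (d(x, y) ≥ ε for all distinct x, y ∈ Y, with ε ≤ 1), then δ(u, v) ≥ ε. -/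
/-- The set X̄ = X ∪ X⁻¹ ∪ {e}: a formal copy `neg x` of each `pos x`, plus a new
neutral letter `e`. -/
inductive Bar (X : Type*) where
  | pos : X → Bar X
  | neg : X → Bar X
  | e : Bar X
  deriving DecidableEq

/-- Formal inverse on X̄, with e⁻¹ = e. -/
def Bar.inv {X : Type*} : Bar X → Bar X
  | pos x => neg x
  | neg x => pos x
  | e => e

/-- The extension of a metric `d` on `X` to `X̄`: the copy `X⁻¹` is isometric to `X`,
and all distances between distinct types (X, X⁻¹, {e}) equal 1. -/
def barDist {X : Type*} (d : X → X → ℝ) : Bar X → Bar X → ℝ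
  | Bar.pos x, Bar.pos y => d x y
  | Bar.neg x, Bar.neg y => d x y
  | Bar.e, Bar.e => 0
  | _, _ => 1

/-- Words over X̄ (possibly with occurrences of the letter e). -/
abbrev Word (X : Type*) := List (Bar X)

/-- A word is irreducible (reduced) if it has no letter e and no adjacent pair x x⁻¹. -/
def Reduced {X : Type*} (w : Word X) : Prop :=
  (∀ a ∈ w, a ≠ Bar.e) ∧ w.Chain' (fun a b => b ≠ Bar.inv a)

/-- Reduction of a word: successively cancel adjacent inverse pairs and delete e's.
Elements of the free group F(X) are identified with reduced words. -/
def reduceWord {X : Type*} [DecidableEq X] : Word X → Word X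
  | [] => []
  | a :: w =>
    match reduceWord w with
    | [] => if a = Bar.e then [] else [a]
    | b :: t => if a = Bar.e then b :: t else if b = Bar.inv a then t else a :: b :: t

/-- The formal inverse of a word. -/
def wordInv {X : Type*} (w : Word X) : Word X := (w.reverse).map Bar.inv

/-- The word w^θ: `x_i^θ = x_i` if `θ i > i`, `e` if `θ i = i`, and `x_{θ i}⁻¹` if
`θ i < i`. -/
def wordMatch {X : Type*} (θ : ℕ → ℕ) (w : Word X) : Word X :=
  (List.range w.length).map fun i =>
    if i < θ i then w.getD i Bar.e
    else if θ i = i then Bar.e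
    else Bar.inv (w.getD (θ i) Bar.e)

/-- ρ(u, v): the sum of the coordinatewise distances between two words. -/
def rho {X : Type*} (d : X → X → ℝ) (u v : Word X) : ℝ :=
  (List.zipWith (barDist d) u v).sum

/-- The Graev norm of a reduced word w: the infimum (a minimum) over matches θ on
`{0, ..., |w| - 1}` of ρ(w, w^θ). -/
noncomputable def graevNorm {X : Type*} (d : X → X → ℝ) (w : Word X) : ℝ :=
  sInf {r : ℝ | ∃ θ : ℕ → ℕ, IsMatch 0 (w.length - 1) θ ∧ r = rho d w (wordMatch θ w)}

/-- The Graev metric δ on F(X): δ(u, v) = N(u⁻¹ v) where u, v are reduced words. -/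
noncomputable def graevDist {X : Type*} [DecidableEq X] (d : X → X → ℝ)
    (u v : Word X) : ℝ :=
  graevNorm d (reduceWord (wordInv u ++ v))

section Aux
set_option linter.unusedSectionVars false
variable {X : Type*} [DecidableEq X]

/-- interpretation of a letter in the free group -/
def barToFG : Bar X → FreeGroup X
  | Bar.pos x => FreeGroup.of x
  | Bar.neg x => (FreeGroup.of x)⁻¹
  | Bar.e => 1

/-- interpretation of a word in the free group -/
def wordToFG (w : Word X) : FreeGroup X := (w.map barToFG).prod

lemma wordToFG_nil : wordToFG ([] : Word X) = 1 := rfl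

lemma wordToFG_cons (a : Bar X) (w : Word X) :
    wordToFG (a :: w) = barToFG a * wordToFG w := by
  simp [wordToFG]

lemma wordToFG_append (u v : Word X) :
    wordToFG (u ++ v) = wordToFG u * wordToFG v := by
  simp [wordToFG]

lemma barToFG_inv (a : Bar X) : barToFG (Bar.inv a) = (barToFG a)⁻¹ := by
  cases a <;> simp [barToFG, Bar.inv]

lemma wordInv_cons (a : Bar X) (w : Word X) :
    wordInv (a :: w) = wordInv w ++ [Bar.inv a] := by
  simp [wordInv]

lemma wordToFG_wordInv (w : Word X) : wordToFG (wordInv w) = (wordToFG w)⁻¹ := by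
  induction w with
  | nil => simp [wordInv, wordToFG]
  | cons a w ih =>
      rw [wordInv_cons, wordToFG_append, ih, wordToFG_cons, wordToFG_cons, wordToFG_nil,
        barToFG_inv]
      group

lemma wordToFG_reduceWord (w : Word X) : wordToFG (reduceWord w) = wordToFG w := by
  induction w with
  | nil => rfl
  | cons a w ih =>
      rw [reduceWord]
      rcases h : reduceWord w with _ | ⟨b, t⟩
      · rw [h] at ih
        by_cases ha : a = Bar.e
        · simp [ha, wordToFG_cons, ← ih, barToFG, wordToFG_nil]
        · simp only [if_neg ha]
          rw [wordToFG_cons, wordToFG_cons, ← ih, wordToFG_nil]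
      · rw [h] at ih
        by_cases ha : a = Bar.e
        · simp only [if_pos ha]
          rw [ih, ha, wordToFG_cons]
          simp [barToFG]
        · simp only [if_neg ha]
          by_cases hb : b = Bar.inv a
          · simp only [if_pos hb]
            rw [wordToFG_cons, ← ih, wordToFG_cons, hb, barToFG_inv]
            group
          · simp only [if_neg hb]
            rw [wordToFG_cons, ih, wordToFG_cons]

end Aux

section Aux2
set_option linter.unusedSectionVars false
variable {X : Type*} [DecidableEq X] [Inhabited X]

/-- encode a letter (e maps to junk) -/
def barEnc : Bar X → X × Bool
  | Bar.pos x => (x, true)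
  | Bar.neg x => (x, false)
  | Bar.e => (default, true)

def barDec : X × Bool → Bar X
  | (x, true) => Bar.pos x
  | (x, false) => Bar.neg x

lemma barDec_barEnc (a : Bar X) (ha : a ≠ Bar.e) : barDec (barEnc a) = a := by
  cases a <;> simp_all [barEnc, barDec]

lemma wordToFG_eq_mk (w : Word X) (hw : ∀ a ∈ w, a ≠ Bar.e) :
    wordToFG w = FreeGroup.mk (w.map barEnc) := by
  induction w with
  | nil => rfl
  | cons a w ih =>
      rw [wordToFG_cons, ih (fun b hb => hw b (List.mem_cons_of_mem a hb)),
        List.map_cons, show (barEnc a :: w.map barEnc) = [barEnc a] ++ w.map barEnc from rfl,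
        ← FreeGroup.mul_mk]
      congr 1
      have ha := hw a List.mem_cons_self
      cases a with
      | pos x => rfl
      | neg x =>
          show (FreeGroup.of x)⁻¹ = _
          rw [show FreeGroup.of x = FreeGroup.mk [(x, true)] from rfl, FreeGroup.inv_mk]
          rfl
      | e => exact absurd rfl ha

lemma reduce_map_barEnc (w : Word X) (hw : Reduced w) :
    FreeGroup.reduce (w.map barEnc) = w.map barEnc := by
  induction w with
  | nil => rfl
  | cons a w ih =>
      obtain ⟨he, hch⟩ := hw
      have hw' : Reduced w := ⟨fun b hb => he b (List.mem_cons_of_mem a hb), hch.tail⟩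
      rw [List.map_cons, FreeGroup.reduce.cons, ih hw']
      cases w with
      | nil => rfl
      | cons b t =>
          simp only [List.map_cons]
          have hba : b ≠ Bar.inv a := (List.isChain_cons_cons.mp hch).1
          have hane : a ≠ Bar.e := he a List.mem_cons_self
          have hbne : b ≠ Bar.e := he b (by simp)
          have : ¬((barEnc a).1 = (barEnc b).1 ∧ (barEnc a).2 = !(barEnc b).2) := by
            rintro ⟨h1, h2⟩
            apply hba
            cases a <;> cases b <;> simp_all [barEnc, Bar.inv]
          simp only [if_neg this]

lemma reduced_inj (u v : Word X) (hu : Reduced u) (hv : Reduced v)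
    (h : wordToFG u = wordToFG v) : u = v := by
  rw [wordToFG_eq_mk u hu.1, wordToFG_eq_mk v hv.1] at h
  have h2 := congrArg FreeGroup.toWord h
  rw [FreeGroup.toWord_mk, FreeGroup.toWord_mk, reduce_map_barEnc u hu,
    reduce_map_barEnc v hv] at h2
  have hu' : List.map barDec (List.map barEnc u) = u := by
    rw [List.map_map]
    conv_rhs => rw [← List.map_id u]
    exact List.map_congr_left (fun a ha => barDec_barEnc a (hu.1 a ha))
  have hv' : List.map barDec (List.map barEnc v) = v := by
    rw [List.map_map]
    conv_rhs => rw [← List.map_id v]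
    exact List.map_congr_left (fun a ha => barDec_barEnc a (hv.1 a ha))
  calc u = List.map barDec (List.map barEnc u) := hu'.symm
    _ = List.map barDec (List.map barEnc v) := by rw [h2]
    _ = v := hv'

end Aux2

section Aux3
set_option linter.unusedSectionVars false
variable {X : Type*} [DecidableEq X]

lemma mem_of_mem_reduceWord {a : Bar X} : ∀ {w : Word X}, a ∈ reduceWord w → a ∈ w := by
  intro w
  induction w with
  | nil => intro h; exact absurd h (by simp [reduceWord])
  | cons b w ih =>
      intro h
      rw [reduceWord] at h
      rcases hr : reduceWord w with _ | ⟨c, t⟩ <;> rw [hr] at h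
      · by_cases hb : b = Bar.e
        · simp [hb] at h
        · simp only [if_neg hb, List.mem_singleton] at h
          simp [h]
      · by_cases hb : b = Bar.e
        · simp only [if_pos hb] at h
          exact List.mem_cons_of_mem b (ih (hr ▸ h))
        · simp only [if_neg hb] at h
          by_cases hc : c = Bar.inv b
          · simp only [if_pos hc] at h
            exact List.mem_cons_of_mem b (ih (hr ▸ List.mem_cons_of_mem c h))
          · simp only [if_neg hc, List.mem_cons] at h
            rcases h with h | h
            · simp [h]
            · exact List.mem_cons_of_mem b (ih (hr ▸ List.mem_cons.mpr h))

lemma reduced_tail {a : Bar X} {w : Word X} (h : Reduced (a :: w)) : Reduced w :=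
  ⟨fun b hb => h.1 b (List.mem_cons_of_mem a hb), h.2.tail⟩

lemma reduced_reduceWord (w : Word X) : Reduced (reduceWord w) := by
  induction w with
  | nil => exact ⟨by simp [reduceWord], List.isChain_nil⟩
  | cons b w ih =>
      rw [reduceWord]
      rcases hr : reduceWord w with _ | ⟨c, t⟩ <;> rw [hr] at ih
      · by_cases hb : b = Bar.e
        · simp only [if_pos hb]
          exact ⟨by simp, List.isChain_nil⟩
        · simp only [if_neg hb]
          exact ⟨by simpa using hb, List.isChain_singleton _⟩
      · by_cases hb : b = Bar.e
        · simpa only [if_pos hb] using ih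
        · simp only [if_neg hb]
          by_cases hc : c = Bar.inv b
          · simp only [if_pos hc]
            exact reduced_tail ih
          · simp only [if_neg hc]
            refine ⟨?_, ?_⟩
            · intro x hx
              rcases List.mem_cons.mp hx with h | h
              · exact h ▸ hb
              · exact ih.1 x h
            · exact List.isChain_cons_cons.mpr ⟨hc, ih.2⟩

lemma d_nonneg (d : X → X → ℝ) (hrefl : ∀ x, d x x = 0) (hsymm : ∀ x y, d x y = d y x)
    (htri : ∀ x y z, d x z ≤ d x y + d y z) (x y : X) : 0 ≤ d x y := by
  have := htri x y x
  rw [hrefl x, hsymm y x] at this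
  linarith

lemma barDist_nonneg (d : X → X → ℝ) (hd : ∀ x y, 0 ≤ d x y) (a b : Bar X) :
    0 ≤ barDist d a b := by
  cases a <;> cases b <;> first | exact hd _ _ | norm_num [barDist]

/-- a Y-letter -/
def IsYLetter (Y : Set X) (a : Bar X) : Prop := ∃ x ∈ Y, a = Bar.pos x ∨ a = Bar.neg x

lemma isYLetter_inv {Y : Set X} {a : Bar X} (h : IsYLetter Y a) : IsYLetter Y (Bar.inv a) := by
  obtain ⟨x, hx, h | h⟩ := h
  · exact ⟨x, hx, Or.inr (by rw [h]; rfl)⟩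
  · exact ⟨x, hx, Or.inl (by rw [h]; rfl)⟩

lemma barDist_sep {Y : Set X} {d : X → X → ℝ} {ε : ℝ} (hε1 : ε ≤ 1)
    (hsep : ∀ x ∈ Y, ∀ y ∈ Y, x ≠ y → ε ≤ d x y)
    {a b : Bar X} (ha : IsYLetter Y a) (hb : IsYLetter Y b) (hab : a ≠ b) :
    ε ≤ barDist d a b := by
  obtain ⟨x, hx, hax⟩ := ha
  obtain ⟨y, hy, hby⟩ := hb
  rcases hax with h1 | h1 <;> rcases hby with h2 | h2 <;> subst h1 <;> subst h2 <;>
    simp only [barDist]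
  · exact hsep x hx y hy (fun hxy => hab (by rw [hxy]))
  · exact hε1
  · exact hε1
  · exact hsep x hx y hy (fun hxy => hab (by rw [hxy]))

lemma barDist_e {d : X → X → ℝ} {ε : ℝ} (hε1 : ε ≤ 1) {a : Bar X} (ha : a ≠ Bar.e) :
    ε ≤ barDist d a Bar.e := by
  cases a with
  | pos x => exact hε1
  | neg x => exact hε1
  | e => exact absurd rfl ha

end Aux3

section Aux4

lemma match_key {n : ℕ} {θ : ℕ → ℕ} (hθ : IsMatch 0 n θ)
    (hfix : ∀ i ≤ n, θ i ≠ i) : ∃ i < n, θ i = i + 1 ∧ θ (i + 1) = i := by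
  obtain ⟨hrange, hinv, hcross⟩ := hθ
  have hrg : ∀ i ≤ n, θ i ≤ n := fun i hi => (hrange i (Nat.zero_le _) hi).2
  have hinv' : ∀ i ≤ n, θ (θ i) = i := fun i hi => hinv i (Nat.zero_le _) hi
  set S : Set ℕ := {g | ∃ i, i ≤ n ∧ i < θ i ∧ θ i = i + g} with hS
  have hSne : S.Nonempty := by
    refine ⟨θ 0, 0, Nat.zero_le _, ?_, by omega⟩
    exact Nat.pos_of_ne_zero (hfix 0 (Nat.zero_le _))
  obtain ⟨i, hin, hlt, hgi⟩ := Nat.sInf_mem hSne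
  set g := sInf S with hgdef
  have hg1 : 1 ≤ g := by omega
  have hg : g = 1 := by
    by_contra hgne
    have hg2 : 2 ≤ g := by omega
    set j := i + 1 with hj
    have hjn : j ≤ n := by have := hrg i hin; omega
    set k := θ j with hk
    have hkn : k ≤ n := hrg j hjn
    have hkj : θ k = j := hinv' j hjn
    have hknej : k ≠ j := hfix j hjn
    have hknei : k ≠ i := by
      intro h
      have : θ i = j := by rw [← h, hkj]
      omega
    rcases Nat.lt_or_ge k i with hki | hki
    · exact hcross ⟨k, i, Nat.zero_le _, hki, hin, by omega, by omega⟩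
    · have hkgtj : j < k := by omega
      rcases Nat.lt_trichotomy k (θ i) with h1 | h1 | h1
      · have : (k - j) ∈ S := ⟨j, hjn, by omega, by omega⟩
        have := Nat.sInf_le this
        omega
      · have : θ k = i := by rw [h1]; exact hinv' i hin
        omega
      · exact hcross ⟨i, j, Nat.zero_le _, by omega, hjn, by omega, by omega⟩
  exact ⟨i, by have := hrg i hin; omega, by omega, by
    have : θ (θ i) = i := hinv' i hin
    have hti : θ i = i + 1 := by omega
    rwa [hti] at this⟩

end Aux4

section Aux5
set_option linter.unusedSectionVars false
variable {X : Type*} [DecidableEq X]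

lemma wordMatch_length (θ : ℕ → ℕ) (w : Word X) : (wordMatch θ w).length = w.length := by
  simp [wordMatch]

lemma wordMatch_getElem (θ : ℕ → ℕ) (w : Word X) (i : ℕ) (hi : i < w.length) :
    (wordMatch θ w)[i]'(by rw [wordMatch_length]; exact hi) =
      if i < θ i then w.getD i Bar.e
      else if θ i = i then Bar.e
      else Bar.inv (w.getD (θ i) Bar.e) := by
  simp [wordMatch]

lemma rho_lower (d : X → X → ℝ) (hd0 : ∀ x y, 0 ≤ d x y)
    (Y : Set X) (ε : ℝ) (hε1 : ε ≤ 1)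
    (hsep : ∀ x ∈ Y, ∀ y ∈ Y, x ≠ y → ε ≤ d x y)
    (w : Word X) (hw : Reduced w) (hne : w ≠ [])
    (hlet : ∀ a ∈ w, IsYLetter Y a)
    (θ : ℕ → ℕ) (hθ : IsMatch 0 (w.length - 1) θ) :
    ε ≤ rho d w (wordMatch θ w) := by
  set n := w.length - 1 with hn
  have hlen : w.length = n + 1 := by
    have := List.length_pos_iff.mpr hne
    omega
  -- find a coordinate where the words differ by at least ε
  have key : ∃ i : ℕ, ∃ hi : i < w.length,
      ε ≤ barDist d (w[i]'hi)
        ((wordMatch θ w)[i]'(by rw [wordMatch_length]; exact hi)) := by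
    by_cases hfix : ∃ i ≤ n, θ i = i
    · obtain ⟨i, hin, hti⟩ := hfix
      refine ⟨i, by omega, ?_⟩
      rw [wordMatch_getElem θ w i (by omega), if_neg (by omega), if_pos hti]
      exact barDist_e hε1 (hw.1 _ (w.getElem_mem _))
    · push_neg at hfix
      obtain ⟨i, hin, hti, hti'⟩ := match_key hθ hfix
      refine ⟨i + 1, by omega, ?_⟩
      rw [wordMatch_getElem θ w (i + 1) (by omega), if_neg (by omega), if_neg (by omega)]
      have hg : List.getD w (θ (i + 1)) Bar.e = w[i]'(by omega) := by
        conv_lhs => rw [hti']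
        exact List.getD_eq_getElem w Bar.e (by omega)
      rw [hg]
      have hchain : w[i + 1]'(by omega) ≠ Bar.inv (w[i]'(by omega)) := by
        have := List.isChain_iff_getElem.mp hw.2 i (by omega)
        simpa using this
      exact barDist_sep hε1 hsep (hlet _ (w.getElem_mem _))
        (isYLetter_inv (hlet _ (w.getElem_mem _))) hchain
  obtain ⟨i, hi, hkey⟩ := key
  have hLlen : (List.zipWith (barDist d) w (wordMatch θ w)).length = w.length := by
    rw [List.length_zipWith, wordMatch_length]; omega
  have hnonneg : ∀ r ∈ List.zipWith (barDist d) w (wordMatch θ w), 0 ≤ r := by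
    intro r hr
    obtain ⟨j, hj, rfl⟩ := List.mem_iff_getElem.mp hr
    rw [List.getElem_zipWith]
    exact barDist_nonneg d hd0 _ _
  have hterm : (List.zipWith (barDist d) w (wordMatch θ w))[i]'(by omega) =
      barDist d (w[i]'hi) ((wordMatch θ w)[i]'(by rw [wordMatch_length]; exact hi)) :=
    List.getElem_zipWith ..
  calc ε ≤ (List.zipWith (barDist d) w (wordMatch θ w))[i]'(by omega) := hterm ▸ hkey
    _ ≤ (List.zipWith (barDist d) w (wordMatch θ w)).sum :=
        List.single_le_sum hnonneg _ (List.getElem_mem _)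

lemma id_isMatch (n : ℕ) : IsMatch 0 n id := by
  refine ⟨fun i _ hi => ⟨Nat.zero_le _, hi⟩, fun i _ _ => rfl, ?_⟩
  rintro ⟨i, j, -, hij, -, hji, -⟩
  simp only [id] at hji
  omega

end Aux5

/-- if u ≠ v are elements of F(X) (reduced words) all of whose letters lie
in an ε-separated subset Y of X (with ε ≤ 1), then δ(u, v) ≥ ε for the Graev metric δ. -/
theorem stmt8 {X : Type*} [DecidableEq X] (d : X → X → ℝ)
    (hrefl : ∀ x, d x x = 0) (heq : ∀ x y, d x y = 0 → x = y)
    (hsymm : ∀ x y, d x y = d y x) (htri : ∀ x y z, d x z ≤ d x y + d y z)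
    (hbd : ∀ x y, d x y ≤ 1)
    (Y : Set X) (ε : ℝ) (hε : 0 < ε) (hε1 : ε ≤ 1)
    (hsep : ∀ x ∈ Y, ∀ y ∈ Y, x ≠ y → ε ≤ d x y)
    (u v : Word X) (hu : Reduced u) (hv : Reduced v)
    (hulet : ∀ a ∈ u, ∃ x ∈ Y, a = Bar.pos x ∨ a = Bar.neg x)
    (hvlet : ∀ a ∈ v, ∃ x ∈ Y, a = Bar.pos x ∨ a = Bar.neg x)
    (huv : u ≠ v) :
    ε ≤ graevDist d u v := by
  have hd0 : ∀ x y, 0 ≤ d x y := d_nonneg d hrefl hsymm htri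
  set w := reduceWord (wordInv u ++ v) with hwdef
  have hwred : Reduced w := reduced_reduceWord _
  have hwlet : ∀ a ∈ w, IsYLetter Y a := by
    intro a ha
    have hmem := mem_of_mem_reduceWord ha
    rcases List.mem_append.mp hmem with h | h
    · obtain ⟨b, hb, rfl⟩ := List.mem_map.mp h
      exact isYLetter_inv (hulet b (List.mem_reverse.mp hb))
    · exact hvlet a h
  have hwne : w ≠ [] := by
    intro h0
    apply huv
    have h1 : wordToFG (wordInv u ++ v) = 1 := by
      rw [← wordToFG_reduceWord, ← hwdef, h0, wordToFG_nil]
    rw [wordToFG_append, wordToFG_wordInv] at h1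
    have h2 : wordToFG u = wordToFG v := by
      have := congrArg (fun z => wordToFG u * z) h1
      simpa [mul_assoc] using this.symm
    by_cases hu0 : u = []
    · by_cases hv0 : v = []
      · rw [hu0, hv0]
      · obtain ⟨a, ha⟩ := List.exists_mem_of_ne_nil v hv0
        obtain ⟨x, -, -⟩ := hvlet a ha
        letI : Inhabited X := ⟨x⟩
        exact reduced_inj u v hu hv h2
    · obtain ⟨a, ha⟩ := List.exists_mem_of_ne_nil u hu0
      obtain ⟨x, -, -⟩ := hulet a ha
      letI : Inhabited X := ⟨x⟩
      exact reduced_inj u v hu hv h2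
  rw [graevDist, graevNorm, ← hwdef]
  apply le_csInf
  · exact ⟨rho d w (wordMatch id w), id, id_isMatch _, rfl⟩
  · rintro r ⟨θ, hθ, rfl⟩
    exact rho_lower d hd0 Y ε hε1 hsep w hwred hwne hwlet θ hθ
end

section
/- Let (X, d) be a metric space with d ≤ 1, G a topological group with a bi-invariant compatible metric d_G ≤ 1, and φ : X → G a 1-Lipschitz map with d_G(1, φ(x)) ≤ d(x, e) := 1 for all x. Extend φ to X̄ by φ(e) = 1 and φ(x⁻¹) = φ(x)⁻¹. Then the unique group homomorphism Φ : F(X) → G extending φ satisfies d_G(Φ(w), 1) ≤ δ(w, e) for every w ∈ F(X), where δ is the Graev metric on F(X); in particular Φ is 1-Lipschitz and continuous. -/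
/-- The extension of φ : X → G to X̄, with φ(e) = 1 and φ(x⁻¹) = φ(x)⁻¹. -/
def barMap {X G : Type*} [Group G] (φ : X → G) : Bar X → G
  | Bar.pos x => φ x
  | Bar.neg x => (φ x)⁻¹
  | Bar.e => 1

lemma barMap_inv {X G : Type*} [Group G] (φ : X → G) (a : Bar X) :
    barMap φ (Bar.inv a) = (barMap φ a)⁻¹ := by
  cases a <;> simp [barMap, Bar.inv]

/-- Key combinatorial lemma: the product associated to a non-crossing match is 1. -/
lemma matchProdAux {G : Type*} [Group G] (f : ℕ → G) :
    ∀ N m n : ℕ, ∀ θ : ℕ → ℕ, n + 1 - m ≤ N → IsMatch m n θ →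
    ((List.range' m (n + 1 - m)).map
      (fun i => if i < θ i then f i else if θ i = i then 1 else (f (θ i))⁻¹)).prod = 1 := by
  intro N
  induction N with
  | zero =>
    intro m n θ hle _
    have : n + 1 - m = 0 := by omega
    simp [this]
  | succ N ih =>
    intro m n θ hle hm
    obtain ⟨hrange, hinv, hnc⟩ := hm
    by_cases hmn : m ≤ n
    · have hk := hrange m le_rfl hmn
      set k := θ m with hkdef
      rcases eq_or_lt_of_le hk.1 with hkm | hkm
      · -- θ m = m
        have h1 : n + 1 - m = (n + 1 - (m+1)) + 1 := by omega
        rw [h1, List.range'_succ]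
        have hmatch' : IsMatch (m+1) n θ := by
          refine ⟨fun i h1 h2 => ?_, fun i h1 h2 => hinv i (by omega) h2, ?_⟩
          · have hr := hrange i (by omega) h2
            have : θ i ≠ m := by
              intro h
              have := hinv i (by omega) h2
              rw [h] at this
              omega
            omega
          · rintro ⟨i, j, h1, h2, h3, h4, h5⟩
            exact hnc ⟨i, j, by omega, h2, h3, h4, h5⟩
        have := ih (m+1) n θ (by omega) hmatch'
        simp only [List.map_cons, List.prod_cons, this, mul_one]
        simp [← hkdef, ← hkm]
      · -- m < k = θ m
        have hθk : θ k = m := by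
          have := hinv m le_rfl hmn
          rwa [← hkdef] at this
        -- split the interval
        have hsplit : List.range' m (n + 1 - m) =
            ((m :: List.range' (m+1) ((k-1) + 1 - (m+1))) ++ [k]) ++
              List.range' (k+1) (n + 1 - (k+1)) := by
          have e1 : List.range' m (k - m) ++ List.range' (m + 1 * (k - m)) (n + 1 - k)
              = List.range' m ((n + 1 - k) + (k - m)) := by rw [List.range'_append]; congr 1; omega
          have e2 : List.range' m ((k+1) - m) ++ List.range' (m + 1 * ((k+1) - m)) (n + 1 - (k+1))
              = List.range' m ((n + 1 - (k+1)) + ((k+1) - m)) :=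
            by rw [List.range'_append]; congr 1; omega
          have e3 : List.range' m ((k) - m) ++ List.range' (m + 1 * ((k) - m)) 1
              = List.range' m (1 + ((k) - m)) := by rw [List.range'_append]; congr 1; omega
          have e4 : (k+1) - m = 1 + (k - m) := by omega
          have e5 : m + 1 * ((k+1) - m) = k + 1 := by omega
          have e6 : m + 1 * (k - m) = k := by omega
          have e7 : n + 1 - m = (n + 1 - (k+1)) + ((k+1) - m) := by omega
          have e8 : k - m = ((k-1) + 1 - (m+1)) + 1 := by omega
          have e9 : List.range' m (k - m) = m :: List.range' (m+1) ((k-1) + 1 - (m+1)) := by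
            rw [e8, List.range'_succ]
          have e10 : List.range' k 1 = [k] := List.range'_one
          rw [e7, ← e2, e5, e4, ← e3, e6, e9, e10]
        rw [hsplit]
        simp only [List.map_append, List.prod_append, List.map_cons, List.prod_cons,
          List.map_nil, List.prod_nil, mul_one]
        -- inner match on [m+1, k-1]
        have hinner : IsMatch (m+1) (k-1) θ := by
          refine ⟨fun i hi1 hi2 => ?_, fun i hi1 hi2 => hinv i (by omega) (by omega), ?_⟩
          · have hi : m ≤ i ∧ i ≤ n := ⟨by omega, by omega⟩
            have hr := hrange i hi.1 hi.2
            have hne_m : θ i ≠ m := by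
              intro h
              have h2 := hinv i hi.1 hi.2
              rw [h, ← hkdef] at h2
              omega
            have hne_k : θ i ≠ k := by
              intro h
              have h2 := hinv i hi.1 hi.2
              rw [h, hθk] at h2
              omega
            have hlt : ¬ (k < θ i) := by
              intro h
              exact hnc ⟨m, i, le_rfl, by omega, by omega, by omega, by omega⟩
            omega
          · rintro ⟨i, j, h1, h2, h3, h4, h5⟩
            exact hnc ⟨i, j, by omega, h2, by omega, h4, h5⟩
        -- outer match on [k+1, n]
        have houter : IsMatch (k+1) n θ := by
          refine ⟨fun j hj1 hj2 => ?_, fun j hj1 hj2 => hinv j (by omega) hj2, ?_⟩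
          · have hr := hrange j (by omega) hj2
            have hne_m : θ j ≠ m := by
              intro h
              have h2 := hinv j (by omega) hj2
              rw [h, ← hkdef] at h2
              omega
            have hne_k : θ j ≠ k := by
              intro h
              have h2 := hinv j (by omega) hj2
              rw [h, hθk] at h2
              omega
            have hge : ¬ (θ j < k) := by
              intro h
              have hjj : θ (θ j) = j := hinv j (by omega) hj2
              exact hnc ⟨m, θ j, le_rfl, by omega, by omega, by omega, by omega⟩
            omega
          · rintro ⟨i, j, h1, h2, h3, h4, h5⟩
            exact hnc ⟨i, j, by omega, h2, h3, h4, h5⟩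
        have hIn := ih (m+1) (k-1) θ (by omega) hinner
        have hOut := ih (k+1) n θ (by omega) houter
        rw [hIn, hOut, mul_one]
        have hm_val : (if m < θ m then f m else if θ m = m then 1 else (f (θ m))⁻¹) = f m := by
          rw [if_pos (by omega)]
        have hk_val : (if k < θ k then f k else if θ k = k then 1 else (f (θ k))⁻¹)
            = (f m)⁻¹ := by
          rw [if_neg (by omega), if_neg (by omega), hθk]
        rw [hm_val, hk_val, mul_one, mul_inv_cancel]
    · have : n + 1 - m = 0 := by omega
      simp [this]

lemma wordMatchProd {X G : Type*} [Group G] (φ : X → G) (w : Word X) (θ : ℕ → ℕ)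
    (hθ : IsMatch 0 (w.length - 1) θ) :
    ((wordMatch θ w).map (barMap φ)).prod = 1 := by
  have hmap : (wordMatch θ w).map (barMap φ) = (List.range w.length).map
      (fun i => if i < θ i then barMap φ (w.getD i Bar.e) else if θ i = i then 1
        else (barMap φ (w.getD (θ i) Bar.e))⁻¹) := by
    rw [wordMatch, List.map_map]
    apply List.map_congr_left
    intro i _
    by_cases h1 : i < θ i
    · simp [h1, Function.comp]
    · by_cases h2 : θ i = i
      · simp [h1, h2, barMap]
      · simp only [Function.comp_apply, if_neg h1, if_neg h2]
        exact barMap_inv φ _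
  cases w with
  | nil => simp [wordMatch]
  | cons a t =>
    rw [hmap, List.range_eq_range']
    have hlen : (a::t).length = ((a::t).length - 1) + 1 - 0 := by simp
    rw [hlen]
    exact matchProdAux _ ((a::t).length) 0 ((a::t).length - 1) θ (by simp) hθ

lemma prod_reduceWord {X G : Type*} [DecidableEq X] [Group G] (φ : X → G) (w : Word X) :
    ((reduceWord w).map (barMap φ)).prod = (w.map (barMap φ)).prod := by
  induction w with
  | nil => rfl
  | cons a w ih =>
    rw [reduceWord]
    rcases hrw : reduceWord w with _ | ⟨b, t⟩ <;> rw [hrw] at ih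
    · by_cases ha : a = Bar.e
      · simp [ha, barMap, ← ih]
      · simp [ha, ← ih]
    · by_cases ha : a = Bar.e
      · simp [ha, barMap, ← ih]
      · by_cases hb : b = Bar.inv a
        · simp only [if_neg ha, if_pos hb]
          rw [List.map_cons, List.prod_cons, ← ih, hb, List.map_cons, List.prod_cons,
            barMap_inv, ← mul_assoc, mul_inv_cancel, one_mul]
        · simp [ha, hb, ← ih]

lemma prod_wordInv {X G : Type*} [Group G] (φ : X → G) (u : Word X) :
    ((wordInv u).map (barMap φ)).prod = ((u.map (barMap φ)).prod)⁻¹ := by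
  induction u with
  | nil => simp [wordInv]
  | cons a u ih =>
    have h : wordInv (a :: u) = wordInv u ++ [Bar.inv a] := by simp [wordInv]
    rw [h, List.map_append, List.prod_append, ih]
    simp [barMap_inv, mul_inv_rev]

lemma idMatch (n : ℕ) : IsMatch 0 n (fun i => i) := by
  refine ⟨fun i _ h => ⟨Nat.zero_le _, h⟩, fun i _ _ => rfl, ?_⟩
  rintro ⟨i, j, _, h2, _, h4, _⟩
  have h4' : j < i := h4
  omega

/-- G a group with a bi-invariant metric d_G ≤ 1, φ : X → G 1-Lipschitz
with d_G(1, φ x) ≤ 1. Then the unique homomorphism Φ : F(X) → G extending φ (given on a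
reduced word by the product of the images of its letters) satisfies
d_G(Φ(w), 1) ≤ δ(w, e); in particular Φ is 1-Lipschitz (hence continuous) for the Graev
metric δ. -/
theorem stmt14 {X G : Type*} [DecidableEq X] [Group G]
    (d : X → X → ℝ)
    (hrefl : ∀ x, d x x = 0) (heq : ∀ x y, d x y = 0 → x = y)
    (hsymm : ∀ x y, d x y = d y x) (htri : ∀ x y z, d x z ≤ d x y + d y z)
    (hbd : ∀ x y, d x y ≤ 1)
    (dG : G → G → ℝ)
    (hGrefl : ∀ g, dG g g = 0) (hGeq : ∀ g h, dG g h = 0 → g = h)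
    (hGsymm : ∀ g h, dG g h = dG h g) (hGtri : ∀ g h k, dG g k ≤ dG g h + dG h k)
    (hGbd : ∀ g h, dG g h ≤ 1)
    (hbi : ∀ a b g h : G, dG (a * g * b) (a * h * b) = dG g h)
    (φ : X → G)
    (hlip : ∀ x y, dG (φ x) (φ y) ≤ d x y)
    (hφe : ∀ x, dG 1 (φ x) ≤ 1) :
    -- Φ is the homomorphism extending φ
    (∀ x, (([Bar.pos x] : Word X).map (barMap φ)).prod = φ x) ∧
    (∀ u v : Word X, ((reduceWord (u ++ v)).map (barMap φ)).prod =
      (u.map (barMap φ)).prod * (v.map (barMap φ)).prod) ∧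
    -- the norm estimate d_G(Φ w, 1) ≤ δ(w, e) = N(w)
    (∀ w : Word X, Reduced w → dG ((w.map (barMap φ)).prod) 1 ≤ graevNorm d w) ∧
    -- Φ is 1-Lipschitz for the Graev metric
    (∀ u v : Word X, Reduced u → Reduced v →
      dG ((u.map (barMap φ)).prod) ((v.map (barMap φ)).prod) ≤ graevDist d u v) := by
  have hletter : ∀ a b : Bar X, dG (barMap φ a) (barMap φ b) ≤ barDist d a b := by
    intro a b
    cases a with
    | pos x =>
      cases b with
      | pos y => exact hlip x y
      | neg y => exact hGbd _ _
      | e => exact hGbd _ _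
    | neg x =>
      cases b with
      | pos y => exact hGbd _ _
      | neg y =>
        have h : dG (φ x)⁻¹ (φ y)⁻¹ = dG (φ y) (φ x) := by
          rw [← hbi (φ x)⁻¹ (φ y)⁻¹ (φ y) (φ x)]
          congr 1 <;> group
        show dG (φ x)⁻¹ (φ y)⁻¹ ≤ d x y
        rw [h]
        exact (hlip y x).trans (le_of_eq (hsymm y x))
      | e => exact hGbd _ _
    | e =>
      cases b with
      | pos y => exact hGbd _ _
      | neg y => exact hGbd _ _
      | e => exact le_of_eq (hGrefl 1)
  have hrho : ∀ u v : Word X, u.length = v.length →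
      dG ((u.map (barMap φ)).prod) ((v.map (barMap φ)).prod) ≤ rho d u v := by
    intro u
    induction u with
    | nil =>
      intro v hv
      have hv0 : v = [] := by cases v <;> simp_all
      subst hv0
      simp [rho, hGrefl]
    | cons a u ih =>
      intro v hv
      cases v with
      | nil => simp at hv
      | cons b v' =>
        simp only [List.map_cons, List.prod_cons]
        set P := (u.map (barMap φ)).prod
        set Q := (v'.map (barMap φ)).prod
        have h1 : dG (barMap φ a * P) (barMap φ a * Q) = dG P Q := by
          have h := hbi (barMap φ a) 1 P Q
          simpa using h
        have h2 : dG (barMap φ a * Q) (barMap φ b * Q) = dG (barMap φ a) (barMap φ b) := by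
          have h := hbi 1 Q (barMap φ a) (barMap φ b)
          simpa using h
        have h3 := hGtri (barMap φ a * P) (barMap φ a * Q) (barMap φ b * Q)
        have h4 := ih v' (by simpa using hv)
        have h5 := hletter a b
        have h6 : rho d (a::u) (b::v') = barDist d a b + rho d u v' := by
          simp [rho]
        rw [h6]
        linarith
  have hnorm : ∀ w : Word X, dG ((w.map (barMap φ)).prod) 1 ≤ graevNorm d w := by
    intro w
    apply le_csInf
    · exact ⟨rho d w (wordMatch (fun i => i) w), fun i => i, idMatch _, rfl⟩
    · rintro r ⟨θ, hθ, rfl⟩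
      have h0 := wordMatchProd φ w θ hθ
      have hlen : w.length = (wordMatch θ w).length := by simp [wordMatch]
      have h := hrho w (wordMatch θ w) hlen
      rwa [h0] at h
  refine ⟨fun x => by simp [barMap],
    fun u v => by rw [prod_reduceWord, List.map_append, List.prod_append],
    fun w _ => hnorm w, ?_⟩
  intro u v _ _
  set A := (u.map (barMap φ)).prod with hA
  set B := (v.map (barMap φ)).prod with hB
  have key : ((reduceWord (wordInv u ++ v)).map (barMap φ)).prod = A⁻¹ * B := by
    rw [prod_reduceWord, List.map_append, List.prod_append, prod_wordInv]
  have h1 : dG A B = dG (A⁻¹ * B) 1 := by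
    rw [← hbi A⁻¹ 1 A B, hGsymm]
    congr 1 <;> group
  rw [graevDist, h1, ← key]
  exact hnorm _
end

section
/- Let (X,d) be a metric space with d ≤ 1 and let δ be the Graev metric on F(X). For any reduced word w = x₀⋯x_n and any match θ on {0,...,n}, the word w^θ (defined coordinatewise by x_i^θ = x_i if θ(i) > i, e if θ(i) = i, x_{θ(i)}^{-1} if θ(i) < i) reduces to the neutral element e of F(X). -/
theorem Bar.inv_inv' {X : Type*} (a : Bar X) : a.inv.inv = a := by cases a <;> rfl

theorem Bar.inv_eq_e_iff {X : Type*} {a : Bar X} : a.inv = Bar.e ↔ a = Bar.e := by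
  cases a <;> simp [Bar.inv]

theorem reduce_cons_congr {X : Type*} [DecidableEq X] {s t : Word X} (x : Bar X)
    (h : reduceWord s = reduceWord t) : reduceWord (x :: s) = reduceWord (x :: t) := by
  rw [reduceWord, reduceWord, h]

theorem chain'_reduce {X : Type*} [DecidableEq X] (w : Word X) :
    (reduceWord w).Chain' (fun a b => b ≠ Bar.inv a) := by
  induction w with
  | nil => simp [reduceWord, List.Chain']
  | cons a w ih =>
    rcases h : reduceWord w with _ | ⟨b, t⟩
    · by_cases ha : a = Bar.e <;> simp [reduceWord, h, ha, List.Chain']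
    · rw [h] at ih
      by_cases ha : a = Bar.e
      · simpa [reduceWord, h, ha] using ih
      · by_cases hb : b = Bar.inv a
        · have hr : reduceWord (a :: w) = t := by rw [reduceWord, h]; simp [ha, hb]
          rw [hr]; exact ih.tail
        · have hr : reduceWord (a :: w) = a :: b :: t := by rw [reduceWord, h]; simp [ha, hb]
          rw [hr]; simp only [List.Chain', List.isChain_cons_cons]; exact ⟨hb, ih⟩

theorem reduce_e_cons {X : Type*} [DecidableEq X] (v : Word X) :
    reduceWord (Bar.e :: v) = reduceWord v := by
  rw [reduceWord]
  rcases h : reduceWord v with _ | ⟨b, t⟩ <;> simp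

theorem reduce_cancel {X : Type*} [DecidableEq X] (a : Bar X) (v : Word X) :
    reduceWord (a :: Bar.inv a :: v) = reduceWord v := by
  by_cases ha : a = Bar.e
  · subst ha
    rw [show Bar.inv (Bar.e : Bar X) = Bar.e from rfl, reduce_e_cons, reduce_e_cons]
  · have hae : Bar.inv a ≠ Bar.e := fun h => ha (Bar.inv_eq_e_iff.mp h)
    rcases h2 : reduceWord v with _ | ⟨c, s⟩
    · have hin : reduceWord (Bar.inv a :: v) = [Bar.inv a] := by
        rw [reduceWord, h2]; simp [hae]
      rw [reduceWord, hin]; simp [ha]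
    · by_cases hc : c = a
      · have hin : reduceWord (Bar.inv a :: v) = s := by
          rw [reduceWord, h2]; simp [hae, hc, Bar.inv_inv']
        rcases hs : s with _ | ⟨c', s'⟩
        · rw [reduceWord, hin, hs]; simp [ha, hc]
        · have hch := chain'_reduce (X := X) v
          rw [h2, hs] at hch; simp only [List.Chain', List.isChain_cons_cons] at hch; rw [hc] at hch
          have hc' : c' ≠ Bar.inv a := hch.1
          rw [reduceWord, hin, hs]; simp [ha, hc, hc']
      · have hin : reduceWord (Bar.inv a :: v) = Bar.inv a :: c :: s := by
          rw [reduceWord, h2]; simp [hae, Bar.inv_inv', hc]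
        rw [reduceWord, hin]; simp [ha]

theorem reduce_append_e {X : Type*} [DecidableEq X] (u v : Word X) :
    reduceWord (u ++ Bar.e :: v) = reduceWord (u ++ v) := by
  induction u with
  | nil => exact reduce_e_cons v
  | cons x u ih => exact reduce_cons_congr x ih

theorem reduce_append_cancel {X : Type*} [DecidableEq X] (u : Word X) (a : Bar X)
    (v : Word X) : reduceWord (u ++ a :: Bar.inv a :: v) = reduceWord (u ++ v) := by
  induction u with
  | nil => exact reduce_cancel a v
  | cons x u ih => exact reduce_cons_congr x ih

theorem seg_reduce {X : Type*} [DecidableEq X] (f : ℕ → Bar X) :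
    ∀ K m n (θ : ℕ → ℕ), n + 1 - m ≤ K → IsMatch m n θ →
      (∀ i, m ≤ i → i ≤ n → (θ i = i → f i = Bar.e) ∧
        (i < θ i → f (θ i) = Bar.inv (f i))) →
      ∀ u v : Word X,
        reduceWord (u ++ (List.range' m (n + 1 - m)).map f ++ v) = reduceWord (u ++ v) := by
  intro K
  induction K with
  | zero =>
    intro m n θ hK _ _ u v
    rw [Nat.le_zero.mp hK]
    simp
  | succ K ih =>
    intro m n θ hK hθ hf u v
    by_cases hmn : n < m
    · rw [show n + 1 - m = 0 by omega]; simp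
    push_neg at hmn
    obtain ⟨hb, hinv, hnc⟩ := hθ
    have hm := hb m le_rfl hmn
    rcases eq_or_lt_of_le hm.1 with hfix | hlt
    · -- θ m = m
      have hfm : f m = Bar.e := (hf m le_rfl hmn).1 hfix.symm
      have hM : IsMatch (m + 1) n θ := by
        refine ⟨fun i h1 h2 => ?_, fun i h1 h2 => hinv i (by omega) h2, fun ⟨i, j, c1, c2, c3, c4, c5⟩ => hnc ⟨i, j, by omega, c2, c3, c4, c5⟩⟩
        have := hb i (by omega) h2
        have hne : θ i ≠ m := fun he => by
          have : i = m := by rw [← hinv i (by omega) h2, he, ← hfix]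
          omega
        omega
      have h1 := ih (m + 1) n θ (by omega) hM (fun i h1 h2 => hf i (by omega) h2)
        (u ++ [f m]) v
      rw [show n + 1 - m = (n + 1 - (m+1)) + 1 by omega, List.range'_succ, List.map_cons]
      have : u ++ (f m :: (List.range' (m + 1) (n + 1 - (m + 1))).map f) ++ v
          = (u ++ [f m]) ++ (List.range' (m + 1) (n + 1 - (m + 1))).map f ++ v := by
        simp
      rw [this, h1]
      rw [show (u ++ [f m]) ++ v = u ++ Bar.e :: v by simp [hfm]]
      exact reduce_append_e u v
    · -- m < θ m
      set k := θ m with hkdef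
      have hθk : θ k = m := hinv m le_rfl hmn
      have hk2 : k ≤ n := hm.2
      have hfk : f k = Bar.inv (f m) := (hf m le_rfl hmn).2 hlt
      -- inner match on [m+1, k-1]
      have hMin : IsMatch (m + 1) (k - 1) θ := by
        refine ⟨fun i h1 h2 => ?_, fun i h1 h2 => hinv i (by omega) (by omega),
          fun ⟨i, j, c1, c2, c3, c4, c5⟩ => hnc ⟨i, j, by omega, c2, by omega, c4, c5⟩⟩
        have hbi := hb i (by omega) (by omega)
        have hnem : θ i ≠ m := fun he => by
          have : i = k := by rw [← hinv i (by omega) (by omega), he]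
          omega
        have hnek : θ i ≠ k := fun he => by
          have : i = m := by rw [← hinv i (by omega) (by omega), he, hθk]
          omega
        have hlek : ¬ (k < θ i) := fun hgt =>
          hnc ⟨m, i, le_rfl, by omega, by omega, by omega, by omega⟩
        omega
      -- outer match on [k+1, n]
      have hMout : IsMatch (k + 1) n θ := by
        refine ⟨fun i h1 h2 => ?_, fun i h1 h2 => hinv i (by omega) h2,
          fun ⟨i, j, c1, c2, c3, c4, c5⟩ => hnc ⟨i, j, by omega, c2, c3, c4, c5⟩⟩
        have hbi := hb i (by omega) h2
        have hnem : θ i ≠ m := fun he => by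
          have : i = k := by rw [← hinv i (by omega) h2, he]
          omega
        have hnek : θ i ≠ k := fun he => by
          have : i = m := by rw [← hinv i (by omega) h2, he, hθk]
          omega
        have hgtk : ¬ (θ i < k) := fun hltk =>
          hnc ⟨m, θ i, le_rfl, by omega, by omega, by omega,
            by rw [hinv i (by omega) h2]; omega⟩
        omega
      have hdecomp : List.range' m (n + 1 - m)
          = List.range' m (k - m) ++ List.range' k (n + 1 - k) := by
        have happ := List.range'_append (s := m) (m := k - m) (n := n + 1 - k) (step := 1)
        rw [show m + 1 * (k - m) = k by omega] at happ
        rw [show n + 1 - m = (k - m) + (n + 1 - k) by omega, ← happ]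
      have hd1 : List.range' m (k - m) = m :: List.range' (m + 1) ((k - 1) + 1 - (m + 1)) := by
        rw [show k - m = ((k-1) + 1 - (m+1)) + 1 by omega, List.range'_succ]
      have hd2 : List.range' k (n + 1 - k) = k :: List.range' (k + 1) (n + 1 - (k + 1)) := by
        rw [show n + 1 - k = (n + 1 - (k+1)) + 1 by omega, List.range'_succ]
      set A := (List.range' (m + 1) ((k - 1) + 1 - (m + 1))).map f with hA
      set B := (List.range' (k + 1) (n + 1 - (k + 1))).map f with hB
      have hin := ih (m + 1) (k - 1) θ (by omega) hMin
        (fun i h1 h2 => hf i (by omega) (by omega)) (u ++ [f m]) (f k :: (B ++ v))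
      have hout := ih (k + 1) n θ (by omega) hMout
        (fun i h1 h2 => hf i (by omega) h2) u v
      rw [hdecomp, hd1, hd2]
      calc reduceWord (u ++ ((m :: List.range' (m + 1) ((k - 1) + 1 - (m + 1))) ++
              (k :: List.range' (k + 1) (n + 1 - (k + 1)))).map f ++ v)
          = reduceWord ((u ++ [f m]) ++ A ++ (f k :: (B ++ v))) := by
            simp [hA, hB]
        _ = reduceWord ((u ++ [f m]) ++ (f k :: (B ++ v))) := hin
        _ = reduceWord (u ++ f m :: Bar.inv (f m) :: (B ++ v)) := by
            simp [hfk]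
        _ = reduceWord (u ++ (B ++ v)) := reduce_append_cancel u (f m) (B ++ v)
        _ = reduceWord (u ++ B ++ v) := by rw [List.append_assoc]
        _ = reduceWord (u ++ v) := hout


/-- for any reduced word w = x₀⋯x_n and any match θ on {0,...,n}, the word
w^θ reduces to the neutral element e of F(X) (the empty reduced word). -/
theorem stmt15 {X : Type*} [DecidableEq X] (w : Word X) (n : ℕ)
    (hw : Reduced w) (hlen : w.length = n + 1)
    (θ : ℕ → ℕ) (hθ : IsMatch 0 n θ) :
    reduceWord (wordMatch θ w) = [] := by
  have hseg := seg_reduce (X := X)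
    (fun i => if i < θ i then w.getD i Bar.e
      else if θ i = i then Bar.e else Bar.inv (w.getD (θ i) Bar.e))
    (n + 1) 0 n θ (by omega) hθ ?_ [] []
  · have : wordMatch θ w = (List.range' 0 (n + 1 - 0)).map
        (fun i => if i < θ i then w.getD i Bar.e
          else if θ i = i then Bar.e else Bar.inv (w.getD (θ i) Bar.e)) := by
      rw [wordMatch, hlen, Nat.sub_zero, List.range_eq_range']
    rw [this]
    simpa [show reduceWord ([] : Word X) = [] from rfl] using hseg
  · intro i _ h2
    obtain ⟨hb, hinv, _⟩ := hθ
    refine ⟨fun hfix => by simp [hfix, lt_irrefl], fun hlt => ?_⟩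
    have hinvi : θ (θ i) = i := hinv i (Nat.zero_le i) h2
    simp only [hinvi]
    rw [if_neg (by omega), if_neg (by omega), if_pos hlt]
end

section
/- Let (X, d) be a metric space with d ≤ 1 and δ the Graev metric on F(X). Then δ extends d: for all x, y ∈ X, δ(x, y) = d(x, y), where x, y are viewed as length-one words in F(X). -/
/-- the Graev metric δ on F(X) extends d: for x, y ∈ X viewed as
length-one words, δ(x, y) = d(x, y). -/
theorem stmt16 {X : Type*} [DecidableEq X] (d : X → X → ℝ)
    (hrefl : ∀ x, d x x = 0) (heq : ∀ x y, d x y = 0 → x = y)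
    (hsymm : ∀ x y, d x y = d y x) (htri : ∀ x y z, d x z ≤ d x y + d y z)
    (hbd : ∀ x y, d x y ≤ 1) (x y : X) :
    graevDist d [Bar.pos x] [Bar.pos y] = d x y := by
  by_cases hxy : x = y
  · subst hxy
    have hw : reduceWord (wordInv [Bar.pos x] ++ [Bar.pos x]) = ([] : Word X) := by
      simp [wordInv, reduceWord, Bar.inv]
    rw [graevDist, hw, hrefl]
    have hset : {r : ℝ | ∃ θ : ℕ → ℕ, IsMatch 0 (([] : Word X).length - 1) θ ∧
        r = rho d [] (wordMatch θ [])} = {0} := by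
      ext r
      simp only [Set.mem_setOf_eq, Set.mem_singleton_iff]
      constructor
      · rintro ⟨θ, _, rfl⟩; simp [rho, wordMatch]
      · rintro rfl
        refine ⟨id, ⟨fun i h1 h2 => ⟨h1, h2⟩, fun i _ _ => rfl, ?_⟩, by simp [rho, wordMatch]⟩
        rintro ⟨i, j, hi, hij, hj, hc1, hc2⟩
        simp only [id] at *; omega
    rw [graevNorm, hset, csInf_singleton]
  · have hne : Bar.pos y ≠ Bar.inv (Bar.neg x) := by
      simp [Bar.inv]; exact fun h => hxy h.symm
    have hw : reduceWord (wordInv [Bar.pos x] ++ [Bar.pos y]) =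
        [Bar.neg x, Bar.pos y] := by
      simp [wordInv, reduceWord, Bar.inv]
      intro h; exact hxy h.symm
    rw [graevDist, hw, graevNorm]
    have hlen : [Bar.neg x, Bar.pos y].length - 1 = 1 := rfl
    rw [hlen]
    have hlb : ∀ r ∈ {r : ℝ | ∃ θ : ℕ → ℕ, IsMatch 0 1 θ ∧
        r = rho d [Bar.neg x, Bar.pos y] (wordMatch θ [Bar.neg x, Bar.pos y])}, d x y ≤ r := by
      rintro r ⟨θ, ⟨h1, h2, h3⟩, rfl⟩
      have h10 : θ 0 ≤ 1 := (h1 0 (by omega) (by omega)).2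
      have h11 : θ 1 ≤ 1 := (h1 1 (by omega) (by omega)).2
      have hi0 : θ (θ 0) = 0 := h2 0 (by omega) (by omega)
      have hi1 : θ (θ 1) = 1 := h2 1 (by omega) (by omega)
      rcases Nat.lt_or_ge (θ 0) 1 with h0 | h0
      · have e0 : θ 0 = 0 := by omega
        have e1 : θ 1 = 1 := by
          rcases Nat.lt_or_ge (θ 1) 1 with h | h
          · exfalso; have h' : θ 1 = 0 := by omega
            rw [h', e0] at hi1; omega
          · omega
        simp only [wordMatch, rho, List.length_cons, List.length_nil]
        norm_num [List.range_succ, e0, e1, barDist]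
        calc d x y ≤ 1 := hbd x y
        _ ≤ 2 := by norm_num
      · have e0 : θ 0 = 1 := by omega
        have e1 : θ 1 = 0 := by rw [e0] at hi0; exact hi0
        simp only [wordMatch, rho, List.length_cons, List.length_nil]
        norm_num [List.range_succ, e0, e1, barDist, Bar.inv, hrefl, hsymm x y]
    have hmem : d x y ∈ {r : ℝ | ∃ θ : ℕ → ℕ, IsMatch 0 1 θ ∧
        r = rho d [Bar.neg x, Bar.pos y] (wordMatch θ [Bar.neg x, Bar.pos y])} := by
      refine ⟨fun i => 1 - i, ⟨fun i hi hi' => by show 0 ≤ 1 - i ∧ 1 - i ≤ 1; omega,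
        fun i hi hi' => by show 1 - (1 - i) = i; omega, ?_⟩, ?_⟩
      · rintro ⟨i, j, hi, hij, hj, hc1, hc2⟩; simp at hc1 hc2; omega
      · simp only [wordMatch, rho, List.length_cons, List.length_nil]
        norm_num [List.range_succ, barDist, Bar.inv, hrefl, hsymm x y]
    exact le_antisymm (csInf_le ⟨d x y, hlb⟩ hmem) (le_csInf ⟨_, hmem⟩ hlb)
end

section
/- Let G be a Polish group with a dense subgroup D = ⋃_n D_n which is an increasing union of subgroups D_n, and suppose for each n there is a continuous homomorphism f_n : G → D_n (where D_n carries a topology making it a topological group and a closed subset of G) such that f_n restricted to D_n is the identity and each f_n is 1-Lipschitz with respect to a fixed compatible metric d on G (also inducing the metric on D_n). Then the map g ↦ (f_n(g))_n is a continuous injective homomorphism of G into ∏_n D_n. -/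
/-- let G be a Polish group with compatible metric d, and D_n an increasing
sequence of subgroups whose union is dense, with each D_n closed in G. Suppose for each n
there is a continuous homomorphism f_n : G → G with range contained in D_n, restricting
to the identity on D_n, and 1-Lipschitz with respect to d. Then g ↦ (f_n(g))_n is a
continuous injective homomorphism of G into ∏_n D_n. -/
theorem stmt19 {G : Type*} [Group G] [MetricSpace G] [IsTopologicalGroup G] [PolishSpace G]
    (D : ℕ → Subgroup G) (hmono : Monotone D)
    (hclosed : ∀ n, IsClosed (D n : Set G))
    (hdense : Dense (⋃ n, (D n : Set G)))
    (f : ∀ n : ℕ, G →* G) (hcont : ∀ n, Continuous (f n))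
    (hrange : ∀ n g, f n g ∈ D n)
    (hid : ∀ n, ∀ g ∈ D n, f n g = g)
    (hlip : ∀ n g h, dist (f n g) (f n h) ≤ dist g h) :
    Continuous (fun (g : G) (n : ℕ) => (⟨f n g, hrange n g⟩ : D n)) ∧
    Function.Injective (fun (g : G) (n : ℕ) => (⟨f n g, hrange n g⟩ : D n)) ∧
    (fun n => (⟨f n (1 : G), hrange n 1⟩ : D n)) = (1 : ∀ n, D n) ∧
    (∀ g h : G, (fun n => (⟨f n (g * h), hrange n (g * h)⟩ : D n)) =
      (fun n => (⟨f n g, hrange n g⟩ : D n)) * (fun n => (⟨f n h, hrange n h⟩ : D n))) := by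
  refine ⟨?_, ?_, ?_, ?_⟩
  · exact continuous_pi fun n => Continuous.subtype_mk (hcont n) _
  · intro g h hgh
    by_contra hne
    have hd : 0 < dist g h := dist_pos.mpr hne
    set ε := dist g h / 5 with hε
    have hεpos : 0 < ε := by positivity
    obtain ⟨u, hudist, hu⟩ := Metric.dense_iff.mp hdense g ε hεpos
    obtain ⟨v, hvdist, hv⟩ := Metric.dense_iff.mp hdense h ε hεpos
    rw [Set.mem_iUnion] at hu hv
    obtain ⟨n, hun⟩ := hu
    obtain ⟨m, hvm⟩ := hv
    set k := max n m
    have huk : u ∈ D k := hmono (le_max_left n m) hun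
    have hvk : v ∈ D k := hmono (le_max_right n m) hvm
    rw [Metric.mem_ball] at hudist hvdist
    have heq : f k g = f k h := by
      have := congrFun hgh k
      simpa using this
    have h1 : dist (f k g) u ≤ dist g u := by
      conv_lhs => rw [show u = f k u from (hid k u huk).symm]
      exact hlip k g u
    have h2 : dist (f k h) v ≤ dist h v := by
      conv_lhs => rw [show v = f k v from (hid k v hvk).symm]
      exact hlip k h v
    have huv : dist u v < 2 * ε := by
      calc dist u v ≤ dist u (f k g) + dist (f k h) v := by
            rw [heq]; exact dist_triangle _ _ _
        _ < 2 * ε := by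
            rw [dist_comm u (f k g)]
            have := dist_comm u g
            have := dist_comm v h
            linarith
    have huv' : dist g h ≤ dist g u + dist u v + dist v h := dist_triangle4 _ _ _ _
    rw [dist_comm u g] at hudist
    rw [dist_comm v h] at hvdist
    rw [dist_comm v h] at huv'
    linarith [hε]
  · funext n
    ext
    simp
  · intro g h
    funext n
    ext
    simp
end
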